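/- Let n₁, n₂, n₃ ≥ 1 and R ≥ 1. For d = 1, 2, 3 let b_d : [0,1] → ℝ^{n_d} be continuous vector-valued functions (the univariate basis functions), and for r = 1,…,R let g_{r,d} : [0,1] → ℝ be continuous. Suppose the weight function ω : [0,1]³ → ℝ is separable of rank R: ω(x₁,x₂,x₃) = Σ_{r=1}^{R} g_{r,1}(x₁) g_{r,2}(x₂) g_{r,3}(x₃). Define the mass matrix M ∈ ℝ^{(n₁n₂n₃)×(n₁n₂n₃)} with entries indexed by multi-indices i = (i₁,i₂,i₃), j = (j₁,j₂,j₃) by M_{i,j} = ∫_{[0,1]³} ω(x) ∏_{d=1}^{3} b_d(x_d)_{i_d} b_d(x_d)_{j_d} dx, and define univariate matrices M_r^{(d)} = ∫₀¹ g_{r,d}(t) b_d(t) b_d(t)ᵀ dt ∈ ℝ^{n_d × n_d}. Then M = Σ_{r=1}^{R} M_r^{(1)} ⊗ M_r^{(2)} ⊗ M_r^{(3)}, where ⊗ denotes the Kronecker product. -/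
import Mathlib


open Matrix Kronecker MeasureTheory

/-- If the weight function `ω` on the unit cube is separable of rank `R`,
`ω(x₁,x₂,x₃) = Σᵣ g_{r,1}(x₁) g_{r,2}(x₂) g_{r,3}(x₃)`, then the isogeometric mass matrix
`M_{i,j} = ∫ ω(x) ∏_d b_d(x_d)_{i_d} b_d(x_d)_{j_d} dx` equals the rank-`R` sum of Kronecker
products of the univariate matrices `M_r^{(d)} = ∫ g_{r,d}(t) b_d(t) b_d(t)ᵀ dt`. -/
theorem mass_matrix_low_rank_kronecker
    (n₁ n₂ n₃ R : ℕ) (hn₁ : 1 ≤ n₁) (hn₂ : 1 ≤ n₂) (hn₃ : 1 ≤ n₃) (hR : 1 ≤ R)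
    (b₁ : ℝ → Fin n₁ → ℝ) (b₂ : ℝ → Fin n₂ → ℝ) (b₃ : ℝ → Fin n₃ → ℝ)
    (hb₁ : ContinuousOn b₁ (Set.Icc 0 1))
    (hb₂ : ContinuousOn b₂ (Set.Icc 0 1))
    (hb₃ : ContinuousOn b₃ (Set.Icc 0 1))
    (g₁ g₂ g₃ : Fin R → ℝ → ℝ)
    (hg₁ : ∀ r, ContinuousOn (g₁ r) (Set.Icc 0 1))
    (hg₂ : ∀ r, ContinuousOn (g₂ r) (Set.Icc 0 1))
    (hg₃ : ∀ r, ContinuousOn (g₃ r) (Set.Icc 0 1))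
    (ω : ℝ × ℝ × ℝ → ℝ)
    (hω : ∀ x₁ x₂ x₃ : ℝ, ω (x₁, x₂, x₃) = ∑ r : Fin R, g₁ r x₁ * g₂ r x₂ * g₃ r x₃) :
    (Matrix.of fun (i j : (Fin n₁ × Fin n₂) × Fin n₃) =>
        ∫ x in (Set.Icc (0:ℝ) 1 ×ˢ Set.Icc (0:ℝ) 1 ×ˢ Set.Icc (0:ℝ) 1),
          ω x * (b₁ x.1 i.1.1 * b₁ x.1 j.1.1) * (b₂ x.2.1 i.1.2 * b₂ x.2.1 j.1.2) *
            (b₃ x.2.2 i.2 * b₃ x.2.2 j.2)) =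
      ∑ r : Fin R,
        (Matrix.of fun (i j : Fin n₁) => ∫ t in Set.Icc (0:ℝ) 1,
            g₁ r t * (b₁ t i * b₁ t j)) ⊗ₖ
          (Matrix.of fun i j => ∫ t in Set.Icc (0:ℝ) 1, g₂ r t * (b₂ t i * b₂ t j)) ⊗ₖ
          (Matrix.of fun i j => ∫ t in Set.Icc (0:ℝ) 1, g₃ r t * (b₃ t i * b₃ t j)) := by
  ext i j
  simp only [Matrix.sum_apply, Matrix.kroneckerMap_apply, Matrix.of_apply]
  -- per-rank separated functions
  set f₁ : Fin R → ℝ → ℝ := fun r t => g₁ r t * (b₁ t i.1.1 * b₁ t j.1.1) with hf₁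
  set f₂ : Fin R → ℝ → ℝ := fun r t => g₂ r t * (b₂ t i.1.2 * b₂ t j.1.2) with hf₂
  set f₃ : Fin R → ℝ → ℝ := fun r t => g₃ r t * (b₃ t i.2 * b₃ t j.2) with hf₃
  have hcont₁ : ∀ r, ContinuousOn (f₁ r) (Set.Icc 0 1) := fun r =>
    (hg₁ r).mul ((((continuous_apply i.1.1).comp_continuousOn hb₁).mul
      ((continuous_apply j.1.1).comp_continuousOn hb₁)))
  have hcont₂ : ∀ r, ContinuousOn (f₂ r) (Set.Icc 0 1) := fun r =>
    (hg₂ r).mul ((((continuous_apply i.1.2).comp_continuousOn hb₂).mul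
      ((continuous_apply j.1.2).comp_continuousOn hb₂)))
  have hcont₃ : ∀ r, ContinuousOn (f₃ r) (Set.Icc 0 1) := fun r =>
    (hg₃ r).mul ((((continuous_apply i.2).comp_continuousOn hb₃).mul
      ((continuous_apply j.2).comp_continuousOn hb₃)))
  have hstep :
      (∫ x in (Set.Icc (0:ℝ) 1 ×ˢ Set.Icc (0:ℝ) 1 ×ˢ Set.Icc (0:ℝ) 1),
          ω x * (b₁ x.1 i.1.1 * b₁ x.1 j.1.1) * (b₂ x.2.1 i.1.2 * b₂ x.2.1 j.1.2) *
            (b₃ x.2.2 i.2 * b₃ x.2.2 j.2)) =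
      ∑ r : Fin R, ∫ x in (Set.Icc (0:ℝ) 1 ×ˢ Set.Icc (0:ℝ) 1 ×ˢ Set.Icc (0:ℝ) 1),
          f₁ r x.1 * (f₂ r x.2.1 * f₃ r x.2.2) := by
    rw [← integral_finset_sum]
    · apply setIntegral_congr_fun
      · exact (measurableSet_Icc.prod (measurableSet_Icc.prod measurableSet_Icc))
      · intro x hx
        obtain ⟨x₁, x₂, x₃⟩ := x
        simp only [hω, Finset.sum_mul, hf₁, hf₂, hf₃]
        exact Finset.sum_congr rfl fun r _ => by ring
    · intro r _
      apply ContinuousOn.integrableOn_compact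
      · exact (isCompact_Icc.prod (isCompact_Icc.prod isCompact_Icc))
      · exact ((hcont₁ r).comp continuousOn_fst (fun x hx => hx.1)).mul
          (((hcont₂ r).comp (continuousOn_fst.comp continuousOn_snd fun x hx => hx.2)
              (fun x hx => hx.2.1)).mul
            ((hcont₃ r).comp (continuousOn_snd.comp continuousOn_snd fun x hx => hx.2)
              (fun x hx => hx.2.2)))
  rw [hstep]
  refine Finset.sum_congr rfl fun r _ => ?_
  rw [Measure.volume_eq_prod,
    setIntegral_prod_mul (f₁ r) (fun y : ℝ × ℝ => f₂ r y.1 * f₃ r y.2) (Set.Icc 0 1)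
      (Set.Icc (0:ℝ) 1 ×ˢ Set.Icc (0:ℝ) 1),
    Measure.volume_eq_prod,
    setIntegral_prod_mul (f₂ r) (f₃ r) (Set.Icc 0 1) (Set.Icc 0 1), ← mul_assoc]
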